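/- If F is a forest (an acyclic finite simple graph) with m edges, then exactly m edge reflections are required to transform F into the edgeless graph; that is, r(F) = m. In particular, a tree on n vertices requires exactly n − 1 edge reflections to reach the edgeless graph. -/

import Mathlib

/-- The pairs of vertices whose adjacency gets toggled by the edge reflection `t_{uv}^X`:
pairs consisting of `u` or `v` together with a vertex of `X \ {u, v}`. -/
def flipPair {V : Type*} (u v : V) (X : Set V) (a b : V) : Prop :=
  (a = u ∧ b ∈ X ∧ b ≠ u ∧ b ≠ v) ∨ (a = v ∧ b ∈ X ∧ b ≠ u ∧ b ≠ v) ∨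
  (b = u ∧ a ∈ X ∧ a ≠ u ∧ a ≠ v) ∨ (b = v ∧ a ∈ X ∧ a ≠ u ∧ a ≠ v)

lemma flipPair_comm {V : Type*} (u v : V) (X : Set V) (a b : V) :
    flipPair u v X a b ↔ flipPair u v X b a := by
  unfold flipPair; tauto

/-- The graph resulting from the edge reflection `t_{uv}^X`: the edge `uv` is deleted
and, for each `w ∈ X \ {u, v}`, the adjacencies `u–w` and `v–w` are toggled. -/
def reflectGraph {V : Type*} (G : SimpleGraph V) (u v : V) (X : Set V) :
    SimpleGraph V where
  Adj a b := a ≠ b ∧ ¬(a = u ∧ b = v) ∧ ¬(a = v ∧ b = u) ∧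
    ¬(G.Adj a b ↔ flipPair u v X a b)
  symm := by
    constructor
    intro a b h
    obtain ⟨h0, h1, h2, h3⟩ := h
    refine ⟨h0.symm, fun hh => h2 ⟨hh.2, hh.1⟩, fun hh => h1 ⟨hh.2, hh.1⟩, ?_⟩
    rw [G.adj_comm, ← flipPair_comm]
    exact h3
  loopless := ⟨fun a h => h.1 rfl⟩

/-- One edge reflection step: `u` and `v` are adjacent, `u, v ∈ X`, every vertex of `X`
other than `u` and `v` is adjacent to at least one of `u` and `v`, and `H` is the
reflected graph. -/
def EdgeReflStep {V : Type*} (G H : SimpleGraph V) : Prop :=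
  ∃ (u v : V) (X : Set V), G.Adj u v ∧ u ∈ X ∧ v ∈ X ∧
    (∀ w ∈ X, w ≠ u → w ≠ v → (G.Adj u w ∨ G.Adj v w)) ∧
    H = reflectGraph G u v X

/-- The least number of edge reflections needed to transform `G` into the edgeless graph. -/
noncomputable def reflNumber {V : Type*} (G : SimpleGraph V) : ℕ :=
  sInf {k | ∃ f : Fin (k + 1) → SimpleGraph V, f 0 = G ∧ f (Fin.last k) = ⊥ ∧
    ∀ i : Fin k, EdgeReflStep (f i.castSucc) (f i.succ)}

namespace EdgeReflAux
open SimpleGraph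

variable {V : Type*}

lemma reflectGraph_adj (G : SimpleGraph V) (u v : V) (X : Set V) (a b : V) :
    (reflectGraph G u v X).Adj a b ↔ a ≠ b ∧ ¬(a = u ∧ b = v) ∧ ¬(a = v ∧ b = u) ∧
      ¬(G.Adj a b ↔ flipPair u v X a b) := Iff.rfl

lemma flipPair_swap (u v : V) (X : Set V) (a b : V) :
    flipPair u v X a b ↔ flipPair v u X a b := by
  constructor <;>
    rintro (⟨h1, h2, h3, h4⟩ | ⟨h1, h2, h3, h4⟩ | ⟨h1, h2, h3, h4⟩ | ⟨h1, h2, h3, h4⟩) <;>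
    first
      | exact Or.inl ⟨h1, h2, h4, h3⟩
      | exact Or.inr (Or.inl ⟨h1, h2, h4, h3⟩)
      | exact Or.inr (Or.inr (Or.inl ⟨h1, h2, h4, h3⟩))
      | exact Or.inr (Or.inr (Or.inr ⟨h1, h2, h4, h3⟩))

lemma reflectGraph_symm (G : SimpleGraph V) (u v : V) (X : Set V) :
    reflectGraph G u v X = reflectGraph G v u X := by
  ext a b
  rw [reflectGraph_adj, reflectGraph_adj, flipPair_swap]
  tauto

lemma not_flipPair {u v : V} {X : Set V} {x y : V}
    (hxu : x ≠ u) (hxv : x ≠ v) (hyu : y ≠ u) (hyv : y ≠ v) : ¬flipPair u v X x y := by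
  rintro (⟨h, -⟩ | ⟨h, -⟩ | ⟨h, -⟩ | ⟨h, -⟩)
  · exact hxu h
  · exact hxv h
  · exact hyu h
  · exact hyv h

/-- If a set is closed under adjacency, vertices inside are not reachable from outside. -/
lemma mem_of_walk {G : SimpleGraph V} {S : Set V} (hS : ∀ x y, G.Adj x y → x ∈ S → y ∈ S) :
    ∀ {a b : V}, G.Walk a b → a ∈ S → b ∈ S := by
  intro a b p
  induction p with
  | nil => exact id
  | cons h p ih => intro ha; exact ih (hS _ _ h ha)

lemma not_reachable_of_cut {G : SimpleGraph V} {S : Set V} {a b : V}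
    (ha : a ∈ S) (hb : b ∉ S) (hS : ∀ x y, G.Adj x y → x ∈ S → y ∈ S) :
    ¬G.Reachable a b := by
  intro h
  obtain ⟨p⟩ := h
  exact hb (mem_of_walk hS p ha)

section Setup

variable {F : SimpleGraph V} {u v : V} {X : Set V}

/-- In an acyclic graph, adjacent vertices have no common neighbour. -/
lemma no_common (hA : F.IsAcyclic) (huv : F.Adj u v) {w : V}
    (h1 : F.Adj u w) (h2 : F.Adj v w) : False := by
  have hp1 : (Walk.cons huv Walk.nil : F.Walk u v).IsPath := by simp [huv.ne]
  have hp2 : (Walk.cons h1 (Walk.cons h2.symm Walk.nil) : F.Walk u v).IsPath := by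
    simp [h1.ne, h2.ne, h2.ne', huv.ne]
  have := isAcyclic_iff_path_unique.mp hA ⟨_, hp1⟩ ⟨_, hp2⟩
  have hlen := congrArg (fun p : F.Path u v => p.1.length) this
  simp [Walk.length_cons] at hlen

lemma radj_not_uv (G : SimpleGraph V) : ¬(reflectGraph G u v X).Adj u v :=
  fun h => h.2.1 ⟨rfl, rfl⟩

lemma radj_of_ne {x y : V} (hxu : x ≠ u) (hxv : x ≠ v) (hyu : y ≠ u) (hyv : y ≠ v) :
    (reflectGraph F u v X).Adj x y ↔ F.Adj x y := by
  rw [reflectGraph_adj]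
  constructor
  · rintro ⟨-, -, -, h⟩
    by_contra hc
    exact h (iff_of_false hc (not_flipPair hxu hxv hyu hyv))
  · intro h
    exact ⟨h.ne, fun hc => hxu hc.1, fun hc => hxv hc.1,
      fun hiff => not_flipPair hxu hxv hyu hyv (hiff.mp h)⟩

lemma flipPair_u {w : V} (hne : u ≠ v) (hwu : w ≠ u) (hwv : w ≠ v) :
    flipPair u v X u w ↔ w ∈ X := by
  constructor
  · rintro (⟨-, h, -, -⟩ | ⟨h, -⟩ | ⟨h, -⟩ | ⟨h, -⟩)
    · exact h
    · exact absurd h hne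
    · exact absurd h hwu
    · exact absurd h hwv
  · intro h
    exact Or.inl ⟨rfl, h, hwu, hwv⟩

lemma radj_u {w : V} (hne : u ≠ v) (hwu : w ≠ u) (hwv : w ≠ v) :
    (reflectGraph F u v X).Adj u w ↔ ¬(F.Adj u w ↔ w ∈ X) := by
  rw [reflectGraph_adj, flipPair_u hne hwu hwv]
  constructor
  · rintro ⟨-, -, -, h⟩; exact h
  · intro h
    exact ⟨fun hc => hwu hc.symm, fun hc => hwv hc.2, fun hc => hne hc.1, h⟩

lemma radj_v {w : V} (hne : u ≠ v) (hwu : w ≠ u) (hwv : w ≠ v) :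
    (reflectGraph F u v X).Adj v w ↔ ¬(F.Adj v w ↔ w ∈ X) := by
  rw [reflectGraph_symm]
  exact radj_u (Ne.symm hne) hwv hwu

variable (hA : F.IsAcyclic) (huv : F.Adj u v)
  (hX : ∀ w ∈ X, w ≠ u → w ≠ v → F.Adj u w ∨ F.Adj v w)

include huv hX in
lemma adj_u_cases {w : V} (hwu : w ≠ u) (hwv : w ≠ v)
    (h : (reflectGraph F u v X).Adj u w) :
    (w ∉ X ∧ F.Adj u w) ∨ (w ∈ X ∧ F.Adj v w ∧ ¬F.Adj u w) := by
  rw [radj_u huv.ne hwu hwv] at h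
  by_cases hw : w ∈ X
  · have hnu : ¬F.Adj u w := fun hu => h (iff_of_true hu hw)
    rcases hX w hw hwu hwv with h1 | h2
    · exact absurd h1 hnu
    · exact Or.inr ⟨hw, h2, hnu⟩
  · refine Or.inl ⟨hw, ?_⟩
    by_contra hnu
    exact h (iff_of_false hnu hw)

include hA huv hX in
lemma reach_cases {x y : V} (hxy : (reflectGraph F u v X).Adj x y) :
    F.Adj x y ∨
    (∃ w, w ≠ u ∧ w ≠ v ∧ w ∈ X ∧ F.Adj v w ∧ ¬F.Adj u w ∧
      ((x = u ∧ y = w) ∨ (x = w ∧ y = u))) ∨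
    (∃ w, w ≠ u ∧ w ≠ v ∧ w ∈ X ∧ F.Adj u w ∧ ¬F.Adj v w ∧
      ((x = v ∧ y = w) ∨ (x = w ∧ y = v))) := by
  have hX' : ∀ w ∈ X, w ≠ v → w ≠ u → F.Adj v w ∨ F.Adj u w :=
    fun w hw h1 h2 => (hX w hw h2 h1).symm
  by_cases hxu : x = u
  · have hxy2 : (reflectGraph F u v X).Adj u y := hxu ▸ hxy
    by_cases hyv : y = v
    · exact absurd (hyv ▸ hxy2) (radj_not_uv F)
    · have hyu : y ≠ u := fun h => hxy.ne (hxu.trans h.symm)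
      rcases adj_u_cases huv hX hyu hyv hxy2 with ⟨-, h⟩ | ⟨h1, h2, h3⟩
      · exact Or.inl (by rw [hxu]; exact h)
      · exact Or.inr (Or.inl ⟨y, hyu, hyv, h1, h2, h3, Or.inl ⟨hxu, rfl⟩⟩)
  · by_cases hxv : x = v
    · have hxy2 : (reflectGraph F v u X).Adj v y := by
        rw [← reflectGraph_symm]; exact hxv ▸ hxy
      by_cases hyu : y = u
      · exact absurd (hyu ▸ hxy2) (radj_not_uv F)
      · have hyv : y ≠ v := fun h => hxy.ne (hxv.trans h.symm)
        rcases adj_u_cases huv.symm hX' hyv hyu hxy2 with ⟨-, h⟩ | ⟨h1, h2, h3⟩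
        · exact Or.inl (by rw [hxv]; exact h)
        · exact Or.inr (Or.inr ⟨y, hyu, hyv, h1, h2, h3, Or.inl ⟨hxv, rfl⟩⟩)
    · by_cases hyu : y = u
      · have hxy2 : (reflectGraph F u v X).Adj u x := hyu ▸ hxy.symm
        rcases adj_u_cases huv hX hxu hxv hxy2 with ⟨-, h⟩ | ⟨h1, h2, h3⟩
        · exact Or.inl (by rw [hyu]; exact h.symm)
        · exact Or.inr (Or.inl ⟨x, hxu, hxv, h1, h2, h3, Or.inr ⟨rfl, hyu⟩⟩)
      · by_cases hyv : y = v
        · have hxy2 : (reflectGraph F v u X).Adj v x := by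
            rw [← reflectGraph_symm]; exact hyv ▸ hxy.symm
          rcases adj_u_cases huv.symm hX' hxv hxu hxy2 with ⟨-, h⟩ | ⟨h1, h2, h3⟩
          · exact Or.inl (by rw [hyv]; exact h.symm)
          · exact Or.inr (Or.inr ⟨x, hxu, hxv, h1, h2, h3, Or.inr ⟨rfl, hyv⟩⟩)
        · exact Or.inl ((radj_of_ne hxu hxv hyu hyv).mp hxy)

lemma reach_edge {e : Sym2 V} {x y : V} (hxy : F.Adj x y) (hne : s(x, y) ≠ e) :
    (F \ fromEdgeSet {e}).Reachable x y := by
  refine Adj.reachable ?_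
  rw [sdiff_adj, fromEdgeSet_adj]
  exact ⟨hxy, fun hc => hne hc.1⟩

include hA huv hX in
lemma reach_of_radj {x y : V} (hxy : (reflectGraph F u v X).Adj x y) {e : Sym2 V}
    (hF : F.Adj x y → s(x, y) ≠ e)
    (huv' : s(u, v) ≠ e)
    (hU : ∀ w, w ≠ u → w ≠ v → w ∈ X → F.Adj v w → ¬F.Adj u w →
      ((x = u ∧ y = w) ∨ (x = w ∧ y = u)) → s(v, w) ≠ e)
    (hV : ∀ w, w ≠ u → w ≠ v → w ∈ X → F.Adj u w → ¬F.Adj v w →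
      ((x = v ∧ y = w) ∨ (x = w ∧ y = v)) → s(u, w) ≠ e) :
    (F \ fromEdgeSet {e}).Reachable x y := by
  rcases reach_cases hA huv hX hxy with h | ⟨w, h1, h2, h3, h4, h5, hc⟩ |
      ⟨w, h1, h2, h3, h4, h5, hc⟩
  · exact reach_edge h (hF h)
  · have r1 : (F \ fromEdgeSet {e}).Reachable u w :=
      (reach_edge huv huv').trans (reach_edge h4 (hU w h1 h2 h3 h4 h5 hc))
    rcases hc with ⟨rfl, rfl⟩ | ⟨rfl, rfl⟩
    · exact r1
    · exact r1.symm
  · have r1 : (F \ fromEdgeSet {e}).Reachable v w :=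
      (reach_edge huv huv').symm.trans (reach_edge h4 (hV w h1 h2 h3 h4 h5 hc))
    rcases hc with ⟨rfl, rfl⟩ | ⟨rfl, rfl⟩
    · exact r1
    · exact r1.symm

include hA huv hX in
lemma bridge_outside {a b : V} (hau : a ≠ u) (hav : a ≠ v) (hbu : b ≠ u) (hbv : b ≠ v)
    (hab : (reflectGraph F u v X).Adj a b) :
    ¬((reflectGraph F u v X) \ fromEdgeSet {s(a, b)}).Reachable a b := by
  have hFab : F.Adj a b := (radj_of_ne hau hav hbu hbv).mp hab
  have hbr : ¬(F \ fromEdgeSet {s(a, b)}).Reachable a b :=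
    isBridge_iff.mp (isAcyclic_iff_forall_adj_isBridge.mp hA hFab)
  refine not_reachable_of_cut (S := {z | (F \ fromEdgeSet {s(a, b)}).Reachable a z})
    (Reachable.refl a) hbr ?_
  intro x y hadj hx
  rw [sdiff_adj, fromEdgeSet_adj] at hadj
  obtain ⟨hxy, hne⟩ := hadj
  have hne' : s(x, y) ≠ s(a, b) := fun h => hne ⟨h, hxy.ne⟩
  have hr : (F \ fromEdgeSet {s(a, b)}).Reachable x y := by
    refine reach_of_radj hA huv hX hxy (fun _ => hne') ?_ ?_ ?_
    · intro heq
      rcases Sym2.eq_iff.mp heq with (⟨h1, -⟩ | ⟨h1, -⟩)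
      · exact hau h1.symm
      · exact hbu h1.symm
    · intro w _ _ _ _ _ _
      intro heq
      rcases Sym2.eq_iff.mp heq with (⟨h1, -⟩ | ⟨h1, -⟩)
      · exact hav h1.symm
      · exact hbv h1.symm
    · intro w _ _ _ _ _ _
      intro heq
      rcases Sym2.eq_iff.mp heq with (⟨h1, -⟩ | ⟨h1, -⟩)
      · exact hau h1.symm
      · exact hbu h1.symm
  exact Reachable.trans hx hr

include hA huv hX in
lemma bridge_uw {w : V} (hwu : w ≠ u) (hwv : w ≠ v)
    (h : (reflectGraph F u v X).Adj u w) :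
    ¬((reflectGraph F u v X) \ fromEdgeSet {s(u, w)}).Reachable u w := by
  rcases adj_u_cases huv hX hwu hwv h with ⟨hwX, hFuw⟩ | ⟨hwX, hFvw, hnFuw⟩
  · -- `w ∉ X`, the edge `uw` is an edge of `F`; cut along the `F`-bridge `uw`.
    have hbr : ¬(F \ fromEdgeSet {s(u, w)}).Reachable u w :=
      isBridge_iff.mp (isAcyclic_iff_forall_adj_isBridge.mp hA hFuw)
    intro hreach
    refine not_reachable_of_cut (S := {z | (F \ fromEdgeSet {s(u, w)}).Reachable w z})
      (Reachable.refl w) (fun hr => hbr hr.symm) ?_ hreach.symm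
    intro x y hadj hx
    rw [sdiff_adj, fromEdgeSet_adj] at hadj
    obtain ⟨hxy, hne⟩ := hadj
    have hne' : s(x, y) ≠ s(u, w) := fun h' => hne ⟨h', hxy.ne⟩
    have hr : (F \ fromEdgeSet {s(u, w)}).Reachable x y := by
      refine reach_of_radj hA huv hX hxy (fun _ => hne') ?_ ?_ ?_
      · intro heq
        rcases Sym2.eq_iff.mp heq with (⟨-, h2⟩ | ⟨h1, -⟩)
        · exact hwv h2.symm
        · exact hwu h1.symm
      · intro w'' _ _ _ _ _ _
        intro heq
        rcases Sym2.eq_iff.mp heq with (⟨h1, -⟩ | ⟨h1, -⟩)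
        · exact huv.ne h1.symm
        · exact hwv h1.symm
      · intro w'' _ _ hw3 _ _ _
        intro heq
        rcases Sym2.eq_iff.mp heq with (⟨-, h2⟩ | ⟨h1, -⟩)
        · exact hwX (h2 ▸ hw3)
        · exact hwu h1.symm
    exact Reachable.trans hx hr
  · -- `w ∈ X`, in `F` we have the edge `vw`; cut along the `F`-bridge `vw`.
    have hbr : ¬(F \ fromEdgeSet {s(v, w)}).Reachable v w :=
      isBridge_iff.mp (isAcyclic_iff_forall_adj_isBridge.mp hA hFvw)
    have huvne : s(u, v) ≠ s(v, w) := by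
      intro heq
      rcases Sym2.eq_iff.mp heq with (⟨h1, -⟩ | ⟨h1, -⟩)
      · exact huv.ne h1
      · exact hwu h1.symm
    have hu_not : ¬(F \ fromEdgeSet {s(v, w)}).Reachable w u := by
      intro hru
      exact hbr ((hru.trans (reach_edge huv huvne)).symm)
    intro hreach
    refine not_reachable_of_cut (S := {z | (F \ fromEdgeSet {s(v, w)}).Reachable w z})
      (Reachable.refl w) hu_not ?_ hreach.symm
    intro x y hadj hx
    rw [sdiff_adj, fromEdgeSet_adj] at hadj
    obtain ⟨hxy, hne⟩ := hadj
    have hne' : s(x, y) ≠ s(u, w) := fun h' => hne ⟨h', hxy.ne⟩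
    have hr : (F \ fromEdgeSet {s(v, w)}).Reachable x y := by
      refine reach_of_radj hA huv hX hxy ?_ huvne ?_ ?_
      · intro hFxy h'
        rw [Sym2.eq_iff] at h'
        have hnadj : ¬(reflectGraph F u v X).Adj v w :=
          fun hadj' => (radj_v huv.ne hwu hwv).mp hadj' (iff_of_true hFvw hwX)
        rcases h' with ⟨h1, h2⟩ | ⟨h1, h2⟩
        · rw [h1, h2] at hxy; exact hnadj hxy
        · rw [h1, h2] at hxy; exact hnadj hxy.symm
      · intro w'' _ _ _ _ _ hpat
        intro heq
        rcases Sym2.eq_iff.mp heq with (⟨-, h2⟩ | ⟨h1, -⟩)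
        · rcases hpat with ⟨p1, p2⟩ | ⟨p1, p2⟩
          · exact hne' (by rw [p1, p2, h2])
          · exact hne' (by rw [p1, p2, h2, Sym2.eq_swap])
        · exact hwv h1.symm
      · intro w'' _ _ _ _ _ _
        intro heq
        rcases Sym2.eq_iff.mp heq with (⟨h1, -⟩ | ⟨h1, -⟩)
        · exact huv.ne h1
        · exact hwu h1.symm
    exact Reachable.trans hx hr

include hA huv hX in
lemma bridge_vw {w : V} (hwu : w ≠ u) (hwv : w ≠ v)
    (h : (reflectGraph F u v X).Adj v w) :
    ¬((reflectGraph F u v X) \ fromEdgeSet {s(v, w)}).Reachable v w := by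
  have hX' : ∀ w ∈ X, w ≠ v → w ≠ u → F.Adj v w ∨ F.Adj u w :=
    fun w hw h1 h2 => (hX w hw h2 h1).symm
  rw [reflectGraph_symm] at h ⊢
  exact bridge_uw hA huv.symm hX' hwv hwu h

include hA huv hX in
lemma reflect_isAcyclic : (reflectGraph F u v X).IsAcyclic := by
  rw [isAcyclic_iff_forall_adj_isBridge]
  intro x y hxy
  rw [isBridge_iff]
  by_cases hxu : x = u
  · subst hxu
    by_cases hyv : y = v
    · subst hyv; exact absurd hxy (radj_not_uv F)
    · exact bridge_uw hA huv hX hxy.ne' hyv hxy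
  · by_cases hyu : y = u
    · subst hyu
      by_cases hxv : x = v
      · subst hxv; exact absurd hxy.symm (radj_not_uv F)
      · rw [Sym2.eq_swap]
        exact fun hr => bridge_uw hA huv hX hxy.ne hxv hxy.symm hr.symm
    · by_cases hxv : x = v
      · subst hxv
        exact bridge_vw hA huv hX hyu hxy.ne' hxy
      · by_cases hyv : y = v
        · subst hyv
          rw [Sym2.eq_swap]
          exact fun hr => bridge_vw hA huv hX hxu hxy.ne hxy.symm hr.symm
        · exact bridge_outside hA huv hX hxu hxv hyu hyv hxy

end Setup

/-! ### The involution on edges used to count -/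

/-- An edge is *marked* if it joins `u` or `v` to a vertex of `X \ {u, v}`. -/
def Marked (u v : V) (X : Set V) (e : Sym2 V) : Prop :=
  ∃ w, (w ∈ X ∧ w ≠ u ∧ w ≠ v) ∧ (e = s(u, w) ∨ e = s(v, w))

open Classical in
/-- The involution on `Sym2 V` swapping `s(u,w)` and `s(v,w)` for `w ∈ X \ {u,v}`. -/
noncomputable def psi [DecidableEq V] (u v : V) (X : Set V) : Sym2 V → Sym2 V := fun e =>
  if Marked u v X e then Sym2.map (Equiv.swap u v) e else e

lemma sym2_repr (e : Sym2 V) : ∃ x y, e = s(x, y) := by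
  induction e using Sym2.ind with
  | _ x y => exact ⟨x, y, rfl⟩

section Psi

variable [DecidableEq V] {u v : V} {X : Set V}

lemma psi_of_marked {e : Sym2 V} (h : Marked u v X e) :
    psi u v X e = Sym2.map (Equiv.swap u v) e := by
  unfold psi
  split
  · rfl
  · next h' => exact absurd h h'

lemma psi_of_not_marked {e : Sym2 V} (h : ¬Marked u v X e) : psi u v X e = e := by
  unfold psi
  split
  · next h' => exact absurd h' h
  · rfl

lemma swap_edge_u {w : V} (hwu : w ≠ u) (hwv : w ≠ v) :
    Sym2.map (Equiv.swap u v) s(u, w) = s(v, w) := by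
  rw [Sym2.map_pair_eq, Equiv.swap_apply_left, Equiv.swap_apply_of_ne_of_ne hwu hwv]

lemma swap_edge_v {w : V} (hwu : w ≠ u) (hwv : w ≠ v) :
    Sym2.map (Equiv.swap u v) s(v, w) = s(u, w) := by
  rw [Sym2.map_pair_eq, Equiv.swap_apply_right, Equiv.swap_apply_of_ne_of_ne hwu hwv]

lemma psi_invol : Function.Involutive (psi u v X) := by
  intro e
  by_cases h : Marked u v X e
  · rw [psi_of_marked h]
    have h' : Marked u v X (Sym2.map (Equiv.swap u v) e) := by
      obtain ⟨w, hw, he | he⟩ := h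
      · exact ⟨w, hw, Or.inr (by rw [he, swap_edge_u hw.2.1 hw.2.2])⟩
      · exact ⟨w, hw, Or.inl (by rw [he, swap_edge_v hw.2.1 hw.2.2])⟩
    rw [psi_of_marked h', Sym2.map_map]
    have : (Equiv.swap u v) ∘ (Equiv.swap u v) = fun x : V => x := by
      funext x; simp
    rw [this, Sym2.map_id']
    rfl
  · rw [psi_of_not_marked h, psi_of_not_marked h]

lemma not_marked_of_ne {x y : V} (hxu : x ≠ u) (hxv : x ≠ v) (hyu : y ≠ u) (hyv : y ≠ v) :
    ¬Marked u v X s(x, y) := by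
  rintro ⟨w, -, he | he⟩
  · rcases Sym2.eq_iff.mp he with ⟨h1, -⟩ | ⟨-, h2⟩
    · exact hxu h1
    · exact hyu h2
  · rcases Sym2.eq_iff.mp he with ⟨h1, -⟩ | ⟨-, h2⟩
    · exact hxv h1
    · exact hyv h2

lemma not_marked_uv (hne : u ≠ v) : ¬Marked u v X s(u, v) := by
  rintro ⟨w, ⟨-, h1, h2⟩, he | he⟩
  · rcases Sym2.eq_iff.mp he with ⟨-, e2⟩ | ⟨e1, -⟩
    · exact h2 e2.symm
    · exact h1 e1.symm
  · rcases Sym2.eq_iff.mp he with ⟨e1, -⟩ | ⟨e1, -⟩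
    · exact hne e1
    · exact h1 e1.symm

lemma not_marked_diag (x : V) : ¬Marked u v X s(x, x) := by
  rintro ⟨w, ⟨-, h1, h2⟩, he | he⟩
  · rcases Sym2.eq_iff.mp he with ⟨e1, e2⟩ | ⟨e1, e2⟩
    · exact h1 (e2.symm.trans e1)
    · exact h1 (e1.symm.trans e2)
  · rcases Sym2.eq_iff.mp he with ⟨e1, e2⟩ | ⟨e1, e2⟩
    · exact h2 (e2.symm.trans e1)
    · exact h2 (e1.symm.trans e2)

lemma marked_uw {w : V} (hne : u ≠ v) (hwu : w ≠ u) (hwv : w ≠ v) :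
    Marked u v X s(u, w) ↔ w ∈ X := by
  constructor
  · rintro ⟨w', ⟨hX', h1, h2⟩, he | he⟩
    · rcases Sym2.eq_iff.mp he with ⟨-, e2⟩ | ⟨e1, -⟩
      · exact e2.symm ▸ hX'
      · exact absurd e1.symm h1
    · rcases Sym2.eq_iff.mp he with ⟨e1, -⟩ | ⟨-, e2⟩
      · exact absurd e1 hne
      · exact absurd e2 hwv
  · intro h
    exact ⟨w, ⟨h, hwu, hwv⟩, Or.inl rfl⟩

lemma marked_symm {e : Sym2 V} : Marked u v X e ↔ Marked v u X e := by
  constructor <;> rintro ⟨w, ⟨h1, h2, h3⟩, h4⟩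
  · exact ⟨w, ⟨h1, h3, h2⟩, h4.symm⟩
  · exact ⟨w, ⟨h1, h3, h2⟩, h4.symm⟩

lemma psi_symm : psi u v X = psi v u X := by
  funext e
  by_cases h : Marked u v X e
  · rw [psi_of_marked h, psi_of_marked (marked_symm.mp h), Equiv.swap_comm]
  · rw [psi_of_not_marked h, psi_of_not_marked (fun h' => h (marked_symm.mpr h'))]

end Psi

section Count

variable [DecidableEq V] {F : SimpleGraph V} {u v : V} {X : Set V}
variable (hA : F.IsAcyclic) (huv : F.Adj u v)
  (hX : ∀ w ∈ X, w ≠ u → w ≠ v → F.Adj u w ∨ F.Adj v w)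

include hA huv hX in
lemma psi_spec_u {y : V} (hyu : y ≠ u) (hyv : y ≠ v) :
    (reflectGraph F u v X).Adj u y ↔
      (psi u v X s(u, y) ∈ F.edgeSet ∧ psi u v X s(u, y) ≠ s(u, v)) := by
  by_cases hY : y ∈ X
  · rw [psi_of_marked ((marked_uw huv.ne hyu hyv).mpr hY), swap_edge_u hyu hyv]
    have h2 : s(v, y) ≠ s(u, v) := by
      intro heq
      rcases Sym2.eq_iff.mp heq with ⟨e1, -⟩ | ⟨-, e2⟩
      · exact huv.ne e1.symm
      · exact hyu e2
    rw [radj_u huv.ne hyu hyv]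
    constructor
    · intro h
      have hnu : ¬F.Adj u y := fun hu => h (iff_of_true hu hY)
      rcases hX y hY hyu hyv with h1 | h1
      · exact absurd h1 hnu
      · exact ⟨h1, h2⟩
    · rintro ⟨h1, -⟩
      have hnu : ¬F.Adj u y := fun hu => no_common hA huv hu h1
      exact fun hiff => hnu (hiff.mpr hY)
  · rw [psi_of_not_marked (fun hm => hY ((marked_uw huv.ne hyu hyv).mp hm))]
    have h2 : s(u, y) ≠ s(u, v) := by
      intro heq
      rcases Sym2.eq_iff.mp heq with ⟨-, e2⟩ | ⟨-, e2⟩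
      · exact hyv e2
      · exact hyu e2
    rw [radj_u huv.ne hyu hyv]
    constructor
    · intro h
      refine ⟨?_, h2⟩
      by_contra hnu
      exact h (iff_of_false hnu hY)
    · rintro ⟨h1, -⟩
      exact fun hiff => hY (hiff.mp h1)

include hA huv hX in
lemma psi_spec (x y : V) :
    (reflectGraph F u v X).Adj x y ↔
      (psi u v X s(x, y) ∈ F.edgeSet ∧ psi u v X s(x, y) ≠ s(u, v)) := by
  have hX' : ∀ w ∈ X, w ≠ v → w ≠ u → F.Adj v w ∨ F.Adj u w :=
    fun w hw h1 h2 => (hX w hw h2 h1).symm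
  have spec_v : ∀ z : V, z ≠ u → z ≠ v →
      ((reflectGraph F u v X).Adj v z ↔
        (psi u v X s(v, z) ∈ F.edgeSet ∧ psi u v X s(v, z) ≠ s(u, v))) := by
    intro z hzu hzv
    have := psi_spec_u hA huv.symm hX' hzv hzu
    rw [← reflectGraph_symm, ← psi_symm] at this
    rw [this]
    constructor <;> rintro ⟨h1, h2⟩ <;>
      exact ⟨h1, fun hc => h2 (hc.trans Sym2.eq_swap)⟩
  by_cases hxy : x = y
  · subst hxy
    rw [psi_of_not_marked (not_marked_diag x)]
    constructor
    · intro h; exact absurd rfl h.1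
    · rintro ⟨h1, -⟩; exact absurd ((mem_edgeSet _).mp h1) F.irrefl
  · by_cases hxu : x = u
    · subst hxu
      by_cases hyv : y = v
      · subst hyv
        rw [psi_of_not_marked (not_marked_uv huv.ne)]
        constructor
        · intro h; exact absurd h (radj_not_uv F)
        · rintro ⟨-, h2⟩; exact absurd rfl h2
      · exact psi_spec_u hA huv hX (fun h => hxy h.symm) hyv
    · by_cases hxv : x = v
      · by_cases hyu : y = u
        · rw [hxv, hyu, show s(v, u) = s(u, v) from Sym2.eq_swap,
            psi_of_not_marked (not_marked_uv huv.ne)]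
          constructor
          · intro h; exact absurd h.symm (radj_not_uv F)
          · rintro ⟨-, h2⟩; exact absurd rfl h2
        · rw [hxv]
          exact spec_v y hyu (fun h => hxy (hxv.trans h.symm))
      · by_cases hyu : y = u
        · have h := psi_spec_u hA huv hX hxu hxv
          rw [hyu, show s(x, u) = s(u, x) from Sym2.eq_swap]
          exact ⟨fun hadj => h.mp hadj.symm, fun hh => (h.mpr hh).symm⟩
        · by_cases hyv : y = v
          · have h := spec_v x hxu hxv
            rw [hyv, show s(x, v) = s(v, x) from Sym2.eq_swap]
            exact ⟨fun hadj => h.mp hadj.symm, fun hh => (h.mpr hh).symm⟩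
          · rw [psi_of_not_marked (not_marked_of_ne hxu hxv hyu hyv)]
            rw [radj_of_ne hxu hxv hyu hyv]
            constructor
            · intro h
              refine ⟨(mem_edgeSet _).mpr h, ?_⟩
              intro heq
              rcases Sym2.eq_iff.mp heq with ⟨e1, -⟩ | ⟨e1, -⟩
              · exact hxu e1
              · exact hxv e1
            · rintro ⟨h1, -⟩; exact (mem_edgeSet _).mp h1

include hA huv hX in
lemma psi_image :
    psi u v X '' (reflectGraph F u v X).edgeSet = F.edgeSet \ {s(u, v)} := by
  ext e
  constructor
  · rintro ⟨e', he', rfl⟩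
    obtain ⟨x, y, rfl⟩ := sym2_repr e'
    have h := (psi_spec hA huv hX x y).mp ((mem_edgeSet _).mp he')
    exact ⟨h.1, h.2⟩
  · rintro ⟨h1, h2⟩
    refine ⟨psi u v X e, ?_, psi_invol e⟩
    obtain ⟨x, y, hrep⟩ := sym2_repr (psi u v X e)
    rw [hrep]
    refine (mem_edgeSet _).mpr ((psi_spec hA huv hX x y).mpr ?_)
    rw [← hrep, psi_invol e]
    exact ⟨h1, fun hc => h2 hc⟩

include hA huv hX in
lemma reflect_edge_count [Fintype V] :
    (reflectGraph F u v X).edgeSet.ncard + 1 = F.edgeSet.ncard := by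
  classical
  have himg := psi_image hA huv hX
  have h1 : (reflectGraph F u v X).edgeSet.ncard = (F.edgeSet \ {s(u, v)}).ncard := by
    rw [← himg, Set.ncard_image_of_injective _ psi_invol.injective]
  rw [h1]
  exact Set.ncard_diff_singleton_add_one ((mem_edgeSet _).mpr huv) (Set.toFinite _)

end Count
end EdgeReflAux

namespace EdgeReflAux
open SimpleGraph

section Machinery

variable {V : Type*} [Fintype V]

lemma reflect_pair (G : SimpleGraph V) (u v : V) :
    reflectGraph G u v {u, v} = G.deleteEdges {s(u, v)} := by
  ext a b
  rw [reflectGraph_adj, SimpleGraph.deleteEdges_adj]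
  have hflip : ¬flipPair u v {u, v} a b := by
    rintro (⟨-, h, h1, h2⟩ | ⟨-, h, h1, h2⟩ | ⟨-, h, h1, h2⟩ | ⟨-, h, h1, h2⟩) <;>
      simp only [Set.mem_insert_iff, Set.mem_singleton_iff] at h <;>
      rcases h with h | h
    · exact h1 h
    · exact h2 h
    · exact h1 h
    · exact h2 h
    · exact h1 h
    · exact h2 h
    · exact h1 h
    · exact h2 h
  constructor
  · rintro ⟨hne, h1, h2, h3⟩
    have hadj : G.Adj a b := by
      by_contra hc
      exact h3 (iff_of_false hc hflip)
    refine ⟨hadj, ?_⟩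
    rw [Set.mem_singleton_iff]
    intro heq
    rcases Sym2.eq_iff.mp heq with ⟨e1, e2⟩ | ⟨e1, e2⟩
    · exact h1 ⟨e1, e2⟩
    · exact h2 ⟨e1, e2⟩
  · rintro ⟨hadj, hmem⟩
    rw [Set.mem_singleton_iff] at hmem
    refine ⟨hadj.ne, fun hc => hmem ?_, fun hc => hmem ?_, fun hiff => hflip (hiff.mp hadj)⟩
    · rw [hc.1, hc.2]
    · rw [hc.1, hc.2, Sym2.eq_swap]

lemma step_delete {G : SimpleGraph V} {u v : V} (huv : G.Adj u v) :
    EdgeReflStep G (G.deleteEdges {s(u, v)}) := by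
  refine ⟨u, v, {u, v}, huv, Set.mem_insert _ _, Set.mem_insert_of_mem _ rfl, ?_,
    (reflect_pair G u v).symm⟩
  intro w hw h1 h2
  simp only [Set.mem_insert_iff, Set.mem_singleton_iff] at hw
  rcases hw with h | h
  · exact absurd h h1
  · exact absurd h h2

lemma exists_seq : ∀ (m : ℕ) (G : SimpleGraph V), G.edgeSet.ncard = m →
    ∃ f : Fin (m + 1) → SimpleGraph V, f 0 = G ∧ f (Fin.last m) = ⊥ ∧
      ∀ i : Fin m, EdgeReflStep (f i.castSucc) (f i.succ) := by
  intro m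
  induction m with
  | zero =>
    intro G hG
    have hempty : G.edgeSet = ∅ := (Set.ncard_eq_zero (G.edgeSet.toFinite)).mp hG
    have hbot : G = ⊥ := SimpleGraph.edgeSet_eq_empty.mp hempty
    exact ⟨fun _ => ⊥, hbot.symm, rfl, fun i => i.elim0⟩
  | succ m ih =>
    intro G hG
    have hne : G.edgeSet.Nonempty := by
      rw [Set.nonempty_iff_ne_empty]
      intro h
      rw [h, Set.ncard_empty] at hG
      exact Nat.succ_ne_zero m hG.symm
    obtain ⟨e, he⟩ := hne
    obtain ⟨u, v, rfl⟩ := EdgeReflAux.sym2_repr e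
    have hadj : G.Adj u v := (SimpleGraph.mem_edgeSet _).mp he
    have hH : (G.deleteEdges {s(u, v)}).edgeSet.ncard = m := by
      rw [SimpleGraph.edgeSet_deleteEdges,
        Set.ncard_diff_singleton_of_mem he, hG]
      omega
    obtain ⟨f, hf0, hflast, hfstep⟩ := ih (G.deleteEdges {s(u, v)}) hH
    refine ⟨Fin.cons G f, Fin.cons_zero _ _, ?_, ?_⟩
    · rw [← Fin.succ_last, Fin.cons_succ]
      exact hflast
    · intro i
      refine Fin.cases ?_ ?_ i
      · rw [Fin.castSucc_zero, Fin.cons_zero, Fin.cons_succ, hf0]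
        exact step_delete hadj
      · intro j
        rw [← Fin.succ_castSucc, Fin.cons_succ, Fin.cons_succ]
        exact hfstep j

lemma seq_lower_bound : ∀ (k : ℕ) (G : SimpleGraph V), G.IsAcyclic →
    (∃ f : Fin (k + 1) → SimpleGraph V, f 0 = G ∧ f (Fin.last k) = ⊥ ∧
      ∀ i : Fin k, EdgeReflStep (f i.castSucc) (f i.succ)) →
    G.edgeSet.ncard ≤ k := by
  intro k
  induction k with
  | zero =>
    rintro G - ⟨f, h0, hl, -⟩
    have : G = ⊥ := by rw [← h0]; exact hl
    rw [this]
    simp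
  | succ k ih =>
    rintro G hAc ⟨f, h0, hl, hstep⟩
    classical
    have hs := hstep 0
    rw [Fin.castSucc_zero, h0] at hs
    obtain ⟨u, v, X, huv, -, -, hX, hH⟩ := hs
    have hcount := EdgeReflAux.reflect_edge_count hAc huv hX
    have hac2 := EdgeReflAux.reflect_isAcyclic hAc huv hX
    have htail : (reflectGraph G u v X).edgeSet.ncard ≤ k := by
      refine ih (reflectGraph G u v X) hac2 ⟨fun i => f i.succ, ?_, ?_, ?_⟩
      · show f (Fin.succ 0) = _
        rw [← hH]
      · show f (Fin.last k).succ = ⊥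
        rw [Fin.succ_last]
        exact hl
      · intro i
        have := hstep i.succ
        rwa [← Fin.succ_castSucc] at this
    omega

lemma reflNumber_acyclic {G : SimpleGraph V} (hAc : G.IsAcyclic) :
    reflNumber G = G.edgeSet.ncard := by
  obtain ⟨f, hf⟩ := exists_seq G.edgeSet.ncard G rfl
  have hmem : G.edgeSet.ncard ∈ {k | ∃ f : Fin (k + 1) → SimpleGraph V, f 0 = G ∧
      f (Fin.last k) = ⊥ ∧ ∀ i : Fin k, EdgeReflStep (f i.castSucc) (f i.succ)} :=
    ⟨f, hf⟩
  refine le_antisymm (Nat.sInf_le hmem) (le_csInf ⟨_, hmem⟩ ?_)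
  intro k hk
  exact seq_lower_bound k G hAc hk

end Machinery
end EdgeReflAux

/-- A forest with `m` edges requires exactly `m` edge reflections to become edgeless;
in particular a tree on `n` vertices requires exactly `n - 1`. -/
theorem reflNumber_forest {V : Type*} [Fintype V] (F : SimpleGraph V) (m : ℕ)
    (hF : F.IsAcyclic) (hm : F.edgeSet.ncard = m) :
    reflNumber F = m ∧ (F.Connected → reflNumber F = Fintype.card V - 1) := by
  have h1 : reflNumber F = m := by rw [EdgeReflAux.reflNumber_acyclic hF, hm]
  refine ⟨h1, fun hconn => ?_⟩
  classical
  have htree : F.IsTree := ⟨hconn, hF⟩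
  have h2 : F.edgeSet.ncard = F.edgeFinset.card := by
    rw [← SimpleGraph.coe_edgeFinset, Set.ncard_coe_finset]
  have h3 := htree.card_edgeFinset
  rw [EdgeReflAux.reflNumber_acyclic hF, h2]
  omega
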